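/- arXiv:2408.01917 — 2 statements merged into one kernel-verified Lean document; each statement's English description precedes it below -/
import Mathlib

section
/- Let f be C³ on an interval with f' > 0 and f'·f''' − (f'')² ≤ 0. Fix X₀ in the interval and define G(X) = f(X)·f''(X₀) − f'(X)·f'(X₀). Then G attains its minimum at X = X₀, i.e. G(X) ≥ G(X₀) for all X in the interval. -/
/-- Let `f` be C³ on an interval with `f' > 0`, `f'' > 0` and `f'·f''' − (f'')² ≤ 0`.
Fix `X₀` in the interval and let `G(X) = f(X)·f''(X₀) − f'(X)·f'(X₀)`. Then `G`
attains its minimum at `X₀`. -/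
theorem stmt3 (I : Set ℝ) (hI : Convex ℝ I)
    (f f' f'' f''' : ℝ → ℝ)
    (hder1 : ∀ x ∈ I, HasDerivWithinAt f (f' x) I x)
    (hder2 : ∀ x ∈ I, HasDerivWithinAt f' (f'' x) I x)
    (hder3 : ∀ x ∈ I, HasDerivWithinAt f'' (f''' x) I x)
    (hcont : ContinuousOn f''' I)
    (hpos : ∀ x ∈ I, 0 < f' x)
    (hpos2 : ∀ x ∈ I, 0 < f'' x)
    (hcin : ∀ x ∈ I, f' x * f''' x - (f'' x) ^ 2 ≤ 0)
    (X₀ : ℝ) (hX₀ : X₀ ∈ I) :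
    ∀ X ∈ I,
      f X₀ * f'' X₀ - f' X₀ * f' X₀ ≤ f X * f'' X₀ - f' X * f' X₀ := by
  -- continuity of f, f', f'' on I
  have hcf : ContinuousOn f I := fun x hx => (hder1 x hx).continuousWithinAt
  have hcf' : ContinuousOn f' I := fun x hx => (hder2 x hx).continuousWithinAt
  have hcf'' : ContinuousOn f'' I := fun x hx => (hder3 x hx).continuousWithinAt
  set h : ℝ → ℝ := fun x => f'' x / f' x with hh
  -- h is antitone on I
  have hne : ∀ x ∈ I, f' x ≠ 0 := fun x hx => ne_of_gt (hpos x hx)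
  have hInhds : ∀ x ∈ interior I, I ∈ nhds x := fun x hx =>
    mem_nhds_iff.mpr ⟨interior I, interior_subset, isOpen_interior, hx⟩
  have hderh : ∀ x ∈ interior I, HasDerivAt h
      ((f''' x * f' x - f'' x * f'' x) / (f' x) ^ 2) x := by
    intro x hx
    have hxI : x ∈ I := interior_subset hx
    have h2 : HasDerivAt f' (f'' x) x := (hder2 x hxI).hasDerivAt (hInhds x hx)
    have h3 : HasDerivAt f'' (f''' x) x := (hder3 x hxI).hasDerivAt (hInhds x hx)
    exact h3.div h2 (hne x hxI)
  have hanti : AntitoneOn h I := by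
    apply antitoneOn_of_deriv_nonpos hI
    · exact ContinuousOn.div hcf'' hcf' hne
    · intro x hx
      exact (hderh x hx).differentiableAt.differentiableWithinAt
    · intro x hx
      rw [(hderh x hx).deriv]
      have hxI : x ∈ I := interior_subset hx
      have hnum : f''' x * f' x - f'' x * f'' x ≤ 0 := by
        have := hcin x hxI
        nlinarith
      exact div_nonpos_of_nonpos_of_nonneg hnum (sq_nonneg _)
  -- the function G
  set G : ℝ → ℝ := fun x => f x * f'' X₀ - f' x * f' X₀ with hG
  have hderG : ∀ x ∈ I, HasDerivWithinAt G (f' x * f'' X₀ - f'' x * f' X₀) I x :=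
    fun x hx => ((hder1 x hx).mul_const _).sub ((hder2 x hx).mul_const _)
  have hcG : ContinuousOn G I := fun x hx => (hderG x hx).continuousWithinAt
  -- key inequality from antitonicity
  have key : ∀ x ∈ I, X₀ ≤ x → 0 ≤ f' x * f'' X₀ - f'' x * f' X₀ := by
    intro x hx hle
    have := hanti hX₀ hx hle
    rw [hh] at this
    have h1 := (div_le_div_iff₀ (hpos x hx) (hpos X₀ hX₀)).mp this
    linarith
  have key' : ∀ x ∈ I, x ≤ X₀ → f' x * f'' X₀ - f'' x * f' X₀ ≤ 0 := by
    intro x hx hle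
    have := hanti hx hX₀ hle
    rw [hh] at this
    have h1 := (div_le_div_iff₀ (hpos X₀ hX₀) (hpos x hx)).mp this
    linarith
  intro X hX
  rcases le_total X₀ X with hle | hle
  · -- monotone on I ∩ Ici X₀
    have hmono : MonotoneOn G (I ∩ Set.Ici X₀) := by
      apply monotoneOn_of_deriv_nonneg (hI.inter (convex_Ici X₀))
      · exact hcG.mono Set.inter_subset_left
      · intro x hx
        have hxS : x ∈ I ∩ Set.Ici X₀ := interior_subset hx
        have : HasDerivAt G (f' x * f'' X₀ - f'' x * f' X₀) x :=
          (((hderG x hxS.1).mono Set.inter_subset_left).hasDerivAt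
            (mem_nhds_iff.mpr ⟨_, interior_subset, isOpen_interior, hx⟩))
        exact this.differentiableAt.differentiableWithinAt
      · intro x hx
        have hxS : x ∈ I ∩ Set.Ici X₀ := interior_subset hx
        have hd : HasDerivAt G (f' x * f'' X₀ - f'' x * f' X₀) x :=
          (((hderG x hxS.1).mono Set.inter_subset_left).hasDerivAt
            (mem_nhds_iff.mpr ⟨_, interior_subset, isOpen_interior, hx⟩))
        rw [hd.deriv]
        exact key x hxS.1 hxS.2
    exact hmono ⟨hX₀, le_refl X₀⟩ ⟨hX, hle⟩ hle
  · -- antitone on I ∩ Iic X₀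
    have hmono : AntitoneOn G (I ∩ Set.Iic X₀) := by
      apply antitoneOn_of_deriv_nonpos (hI.inter (convex_Iic X₀))
      · exact hcG.mono Set.inter_subset_left
      · intro x hx
        have hxS : x ∈ I ∩ Set.Iic X₀ := interior_subset hx
        have : HasDerivAt G (f' x * f'' X₀ - f'' x * f' X₀) x :=
          (((hderG x hxS.1).mono Set.inter_subset_left).hasDerivAt
            (mem_nhds_iff.mpr ⟨_, interior_subset, isOpen_interior, hx⟩))
        exact this.differentiableAt.differentiableWithinAt
      · intro x hx
        have hxS : x ∈ I ∩ Set.Iic X₀ := interior_subset hx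
        have hd : HasDerivAt G (f' x * f'' X₀ - f'' x * f' X₀) x :=
          (((hderG x hxS.1).mono Set.inter_subset_left).hasDerivAt
            (mem_nhds_iff.mpr ⟨_, interior_subset, isOpen_interior, hx⟩))
        rw [hd.deriv]
        exact key' x hxS.1 hxS.2
    exact hmono ⟨hX, hle⟩ ⟨hX₀, le_refl X₀⟩ hle
end

section
/- Let K ⊆ ℝ² be a measurable set containing, for every a ∈ [1,2], a translate of the curve {(t, a f(t)) : t ∈ [c₀, 1]} for some fixed c₀ < 1, and suppose |K(δ)| ≤ A(δ) where K(δ) is the vertical δ-thickening. Then the maximal operator R_δ g(a) = sup_{x∈ℝ²} (2δ)^{−1} ∫₀¹∫_{−δ}^{δ} |g(x₁+t, x₂+a f(t)+s)| ds dt satisfies: for g = 1_{K(δ)}, R_δ g(a) ≥ 1 − c₀ for all a ∈ [1,2], and hence the operator norm R(p,q,δ) from L^p(ℝ²) to L^q([1,2]) is at least (1−c₀)·A(δ)^{−1/p}. In particular, if A(δ) ≲ (log δ^{−1})^{−2}, then R(p,q,δ) ≳ (log δ^{−1})^{2/p}. -/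
open Set MeasureTheory
open scoped ENNReal

/-- Vertical `δ`-thickening of a planar set. -/
def vthick (S : Set (ℝ × ℝ)) (δ : ℝ) : Set (ℝ × ℝ) :=
  {p : ℝ × ℝ | ∃ q ∈ S, p.1 = q.1 ∧ |p.2 - q.2| ≤ δ}

/-- The `δ`-thickened maximal operator along the curves `t ↦ a f(t)`. -/
noncomputable def Rop (f : ℝ → ℝ) (δ : ℝ) (g : ℝ × ℝ → ℝ) (a : ℝ) : ℝ :=
  ⨆ x : ℝ × ℝ, (2 * δ)⁻¹ *
    ∫ t in (0:ℝ)..1, ∫ s in (-δ)..δ, |g (x.1 + t, x.2 + a * f t + s)|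

section Helpers
open Filter Topology
open scoped ENNReal


private def NS (b : ℕ → ℕ) (k : ℕ) : Set (ℕ → ℕ) := {σ | ∀ i, i < k → σ i ≤ b i}

private lemma NS_zero (b : ℕ → ℕ) : NS b 0 = univ := by
  ext σ; simp [NS]

private lemma NS_union (b : ℕ → ℕ) (k : ℕ) :
    NS b k = ⋃ m : ℕ, NS (Function.update b k m) (k + 1) := by
  ext σ
  constructor
  · intro hσ
    refine mem_iUnion.2 ⟨σ k, fun i hi => ?_⟩
    rcases Nat.lt_succ_iff_lt_or_eq.1 hi with h | rfl
    · rw [Function.update_of_ne h.ne]; exact hσ i h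
    · rw [Function.update_self]
  · intro hσ
    rcases mem_iUnion.1 hσ with ⟨m, hm⟩
    intro i hi
    have := hm i (hi.trans (Nat.lt_succ_self k))
    rwa [Function.update_of_ne hi.ne] at this

private lemma NS_mono (b : ℕ → ℕ) (k : ℕ) {m m' : ℕ} (h : m ≤ m') :
    NS (Function.update b k m) (k + 1) ⊆ NS (Function.update b k m') (k + 1) := by
  intro σ hσ i hi
  have h1 := hσ i hi
  rcases eq_or_ne i k with rfl | hik
  · rw [Function.update_self] at h1 ⊢
    exact h1.trans h
  · rwa [Function.update_of_ne hik] at h1 ⊢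

private lemma NS_congr {b b' : ℕ → ℕ} {k : ℕ} (h : ∀ i, i < k → b i = b' i) :
    NS b k = NS b' k := by
  ext σ; constructor <;> intro hσ i hi
  · rw [← h i hi]; exact hσ i hi
  · rw [h i hi]; exact hσ i hi

/-- Key extension step. -/
private lemma NS_step (g : (ℕ → ℕ) → ℝ × ℝ) {r : ℝ≥0∞} (b : ℕ → ℕ) (k : ℕ)
    (h : r < volume (g '' NS b k)) :
    ∃ m, r < volume (g '' NS (Function.update b k m) (k + 1)) := by
  have h1 : g '' NS b k = ⋃ m : ℕ, g '' NS (Function.update b k m) (k + 1) := by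
    rw [NS_union b k, image_iUnion]
  have hdir : Directed (· ⊆ ·) (fun m => g '' NS (Function.update b k m) (k + 1)) := by
    intro m m'
    rcases le_total m m' with h' | h'
    · exact ⟨m', image_mono (NS_mono b k h'), subset_rfl⟩
    · exact ⟨m, subset_rfl, image_mono (NS_mono b k h')⟩
  rw [h1, hdir.measure_iUnion] at h
  exact lt_iSup_iff.1 h

/-- The diagonal/compactness lemma. -/
private lemma NS_open (g : (ℕ → ℕ) → ℝ × ℝ) (hg : Continuous g) (τ : ℕ → ℕ)
    {U : Set (ℝ × ℝ)} (hU : IsOpen U) (hKU : g '' (univ.pi fun i => Iic (τ i)) ⊆ U) :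
    ∃ k, g '' NS τ k ⊆ U := by
  by_contra hcon
  push_neg at hcon
  have hex : ∀ k, ∃ σ ∈ NS τ k, g σ ∉ U := by
    intro k
    rcases not_subset.1 (hcon k) with ⟨y, hy, hyU⟩
    rcases hy with ⟨σ, hσ, rfl⟩
    exact ⟨σ, hσ, hyU⟩
  choose σ hσ hσU using hex
  set σt : ℕ → ℕ → ℕ := fun k i => if i < k then σ k i else 0 with hσt
  have hmem : ∀ k, σt k ∈ (univ.pi fun i => Iic (τ i)) := by
    intro k i _
    simp only [hσt]
    split_ifs with h
    · exact hσ k i h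
    · exact Nat.zero_le _
  have hKc : IsCompact (univ.pi fun i : ℕ => Iic (τ i)) :=
    isCompact_univ_pi fun i => (Set.finite_Iic (τ i)).isCompact
  obtain ⟨L, hL, φ, hφ, hconv⟩ := hKc.tendsto_subseq hmem
  -- coordinatewise, σ (φ j) tends to L
  have hσconv : Tendsto (fun j => σ (φ j)) atTop (𝓝 L) := by
    rw [tendsto_pi_nhds]
    intro i
    have h1 : Tendsto (fun j => σt (φ j) i) atTop (𝓝 (L i)) :=
      (tendsto_pi_nhds.1 hconv) i
    apply h1.congr'
    filter_upwards [eventually_gt_atTop i] with j hj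
    have : i < φ j := lt_of_lt_of_le hj (hφ.le_apply)
    simp only [hσt, if_pos this]
  have hgU : ∀ᶠ j in atTop, g (σ (φ j)) ∈ U :=
    ((hg.tendsto L).comp hσconv).eventually (hU.mem_nhds (hKU (mem_image_of_mem g hL)))
  rcases hgU.exists with ⟨j, hj⟩
  exact hσU (φ j) hj

/-- Capacitability: inner regularity by compacts of the image of `ℕ^ℕ`. -/
private lemma capacity_lemma (g : (ℕ → ℕ) → ℝ × ℝ) (hg : Continuous g)
    {r : ℝ≥0∞} (hr : r < volume (range g)) :
    ∃ C : Set (ℝ × ℝ), IsCompact C ∧ C ⊆ range g ∧ r ≤ volume C := by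
  classical
  set step : (ℕ → ℕ) → ℕ → (ℕ → ℕ) := fun c k =>
    Function.update c k
      (if h : ∃ m, r < volume (g '' NS (Function.update c k m) (k + 1)) then h.choose else 0)
    with hstep
  set b : ℕ → ℕ → ℕ := fun k => Nat.rec (fun _ => 0) (fun k c => step c k) k with hb
  have hbsucc : ∀ k, b (k + 1) = step (b k) k := fun k => rfl
  have hagree : ∀ j k i, i < k → k ≤ j → b j i = b k i := by
    intro j
    induction j with
    | zero =>
      intro k i _ hk
      obtain rfl : k = 0 := Nat.le_zero.1 hk
      rfl
    | succ j ih =>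
      intro k i hik hkj
      rcases Nat.lt_succ_iff_lt_or_eq.1 (Nat.lt_succ_of_le hkj) with h | rfl
      · have h1 : b (j+1) i = b j i := by
          rw [hbsucc, hstep]
          exact Function.update_of_ne (by omega) _ _
        rw [h1, ih k i hik (by omega)]
      · rfl
  set τ : ℕ → ℕ := fun i => b (i + 1) i with hτ
  have hNSeq : ∀ k, NS (b k) k = NS τ k := by
    intro k
    apply NS_congr
    intro i hi
    show b k i = b (i + 1) i
    exact hagree k (i+1) i (Nat.lt_succ_self i) hi
  have hinv : ∀ k, r < volume (g '' NS τ k) := by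
    intro k
    induction k with
    | zero => rw [NS_zero, image_univ]; exact hr
    | succ k ih =>
      rw [← hNSeq k] at ih
      have hex : ∃ m, r < volume (g '' NS (Function.update (b k) k m) (k + 1)) :=
        NS_step g (b k) k ih
      have : b (k + 1) = Function.update (b k) k hex.choose := by
        rw [hbsucc, hstep]; simp only [dif_pos hex]
      rw [← hNSeq (k+1), this]
      exact hex.choose_spec
  have hKc : IsCompact (univ.pi fun i : ℕ => Iic (τ i)) :=
    isCompact_univ_pi fun i => (Set.finite_Iic (τ i)).isCompact
  refine ⟨g '' (univ.pi fun i => Iic (τ i)), hKc.image hg, image_subset_range _ _, ?_⟩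
  by_contra hlt
  push_neg at hlt
  obtain ⟨U, hCU, hUopen, hUlt⟩ := exists_isOpen_lt_of_lt _ r hlt
  obtain ⟨k, hk⟩ := NS_open g hg τ hUopen hCU
  exact absurd ((hinv k).trans_le (measure_mono hk)) (not_lt.2 hUlt.le)


/-- Every analytic subset of the plane with finite outer measure has a measurable core
of full measure. -/
private lemma exists_core {V : Set (ℝ × ℝ)} (hV : MeasureTheory.AnalyticSet V)
    (hfin : volume V ≠ ∞) :
    ∃ E : Set (ℝ × ℝ), MeasurableSet E ∧ E ⊆ V ∧ volume (V \ E) = 0 := by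
  by_cases h0 : volume V = 0
  · exact ⟨∅, MeasurableSet.empty, empty_subset _, by
      rw [diff_empty]; exact h0⟩
  rw [MeasureTheory.AnalyticSet] at hV
  rcases hV with rfl | ⟨g, hgc, hgr⟩
  · simp at h0
  subst hgr
  have hcap : ∀ n : ℕ, ∃ C : Set (ℝ × ℝ), IsCompact C ∧ C ⊆ range g ∧
      volume (range g) - (n : ℝ≥0∞)⁻¹ ≤ volume C := by
    intro n
    apply capacity_lemma g hgc
    exact ENNReal.sub_lt_self hfin h0 (ENNReal.inv_ne_zero.2 (ENNReal.natCast_ne_top n))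
  choose C hC1 hC2 hC3 using hcap
  refine ⟨⋃ n, C n, MeasurableSet.iUnion fun n => (hC1 n).measurableSet, iUnion_subset hC2, ?_⟩
  have hEle : volume (range g) ≤ volume (⋃ n, C n) := by
    apply ENNReal.le_of_forall_pos_le_add
    intro ε hε _
    obtain ⟨n, hn⟩ := ENNReal.exists_inv_nat_lt (by exact_mod_cast hε.ne' : (ε : ℝ≥0∞) ≠ 0)
    have h1 : volume (range g) - (n : ℝ≥0∞)⁻¹ ≤ volume (⋃ m, C m) :=
      (hC3 n).trans (measure_mono (subset_iUnion C n))
    have h2 : volume (range g) ≤ volume (⋃ m, C m) + (n : ℝ≥0∞)⁻¹ := tsub_le_iff_right.1 h1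
    exact h2.trans (add_le_add le_rfl hn.le)
  have hsub : range g \ ⋃ n, C n ⊆ toMeasurable volume (range g) \ ⋃ n, C n :=
    diff_subset_diff_left (subset_toMeasurable _ _)
  refine measure_mono_null hsub ?_
  have hEmeas : MeasurableSet (⋃ n, C n) := MeasurableSet.iUnion fun n => (hC1 n).measurableSet
  have hEfin : volume (⋃ n, C n) ≠ ∞ := by
    refine ne_of_lt (lt_of_le_of_lt (measure_mono (iUnion_subset hC2)) ?_)
    exact lt_of_le_of_ne le_top hfin
  rw [measure_diff ((iUnion_subset hC2).trans (subset_toMeasurable _ _))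
      hEmeas.nullMeasurableSet hEfin, measure_toMeasurable]
  exact tsub_eq_zero_of_le hEle



private lemma inner_integrable (f' : ℝ → ℝ) (hf' : Continuous f') (a x₁ x₂ : ℝ) {δ : ℝ}
    (hδ : 0 < δ) {V E N' : Set (ℝ × ℝ)} (hE : MeasurableSet E) (hN' : MeasurableSet N')
    (hN'0 : volume N' = 0) (hEV : E ⊆ V) (hVE : V ⊆ E ∪ N') :
    IntegrableOn
      (fun t => ∫ s in (-δ)..δ, |V.indicator (fun _ => (1:ℝ)) (x₁ + t, x₂ + a * f' t + s)|)
      (Ioc (0:ℝ) 1) volume := by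
  set m : ℝ × ℝ → ℝ × ℝ := fun p => (x₁ + p.1, x₂ + a * f' p.1 + p.2) with hm
  have hmc : Continuous m := by fun_prop
  have hmp : MeasurePreserving m volume volume := by
    rw [Measure.volume_eq_prod]
    exact MeasurePreserving.skew_product (g := fun t s => x₂ + a * f' t + s)
      ⟨measurable_const_add x₁, map_add_left_eq_self volume x₁⟩
      (by fun_prop)
      (Filter.Eventually.of_forall fun t => map_add_left_eq_self volume (x₂ + a * f' t))
  have hpre : volume (m ⁻¹' N') = 0 := by
    rw [hmp.measure_preimage hN'.nullMeasurableSet]; exact hN'0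
  have haeglob : (fun p : ℝ × ℝ => |V.indicator (fun _ => (1:ℝ)) (m p)|)
      =ᵐ[(volume : Measure (ℝ × ℝ))] (fun p => E.indicator (fun _ => (1:ℝ)) (m p)) := by
    refine (MeasureTheory.ae_iff).2 (measure_mono_null ?_ hpre)
    intro p hp
    simp only [mem_setOf_eq] at hp
    by_contra hmem
    apply hp
    by_cases hv : m p ∈ V
    · have he : m p ∈ E := (hVE hv).resolve_right hmem
      simp [Set.indicator_of_mem, hv, he]
    · have he : m p ∉ E := fun h => hv (hEV h)
      simp [Set.indicator_of_notMem, hv, he]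
  set μ1 := volume.restrict (Ioc (0:ℝ) 1) with hμ1
  set μ2 := volume.restrict (Ioc (-δ) δ) with hμ2
  haveI : IsFiniteMeasure μ1 :=
    ⟨by rw [hμ1, Measure.restrict_apply_univ]; exact measure_Ioc_lt_top⟩
  haveI : IsFiniteMeasure μ2 :=
    ⟨by rw [hμ2, Measure.restrict_apply_univ]; exact measure_Ioc_lt_top⟩
  have haeν : (fun p : ℝ × ℝ => |V.indicator (fun _ => (1:ℝ)) (m p)|)
      =ᵐ[μ1.prod μ2] (fun p => E.indicator (fun _ => (1:ℝ)) (m p)) := by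
    rw [hμ1, hμ2, Measure.prod_restrict, ← Measure.volume_eq_prod]
    exact ae_restrict_of_ae haeglob
  have hGE : Integrable (fun p : ℝ × ℝ => E.indicator (fun _ => (1:ℝ)) (m p)) (μ1.prod μ2) := by
    refine Integrable.mono' (integrable_const 1)
      (((measurable_const.indicator hE).comp hmc.measurable).aestronglyMeasurable)
      (Filter.Eventually.of_forall fun p => ?_)
    by_cases h : m p ∈ E <;> simp [h]
  have hG : Integrable (fun p : ℝ × ℝ => |V.indicator (fun _ => (1:ℝ)) (m p)|) (μ1.prod μ2) :=
    hGE.congr haeν.symm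
  have hres := hG.integral_prod_left
  have heq : (fun t => ∫ s in (-δ)..δ, |V.indicator (fun _ => (1:ℝ)) (x₁ + t, x₂ + a * f' t + s)|)
      = fun t => ∫ s, |V.indicator (fun _ => (1:ℝ)) (m (t, s))| ∂μ2 := by
    funext t
    rw [intervalIntegral.integral_of_le (by linarith : -δ ≤ δ)]
  rw [IntegrableOn, heq]
  exact hres


private lemma vthick_analytic {K : Set (ℝ × ℝ)} (hK : MeasurableSet K) (δ : ℝ) :
    MeasureTheory.AnalyticSet (vthick K δ) := by
  have h : vthick K δ = (fun p : (ℝ × ℝ) × ℝ => (p.1.1, p.1.2 + p.2)) '' (K ×ˢ Icc (-δ) δ) := by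
    ext p
    constructor
    · rintro ⟨q, hq, h1, h2⟩
      refine ⟨(q, p.2 - q.2), ⟨hq, ?_⟩, ?_⟩
      · exact abs_le.1 h2
      · simp only
        rw [← h1, add_sub_cancel]
    · rintro ⟨⟨q, ε⟩, ⟨hq, hε⟩, rfl⟩
      refine ⟨q, hq, rfl, ?_⟩
      simpa [abs_le] using hε
  rw [h]
  exact ((hK.prod measurableSet_Icc).analyticSet).image_of_continuous (by fun_prop)

end Helpers

/-- If `K ⊆ ℝ²` contains, for every `a ∈ [1,2]`, a translate of the curve
`{(t, a f(t)) : t ∈ [c₀,1]}`, and `|K(δ)| ≤ A`, then for `g = 1_{K(δ)}` one has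
`R_δ g(a) ≥ 1 − c₀` for all `a ∈ [1,2]`, and hence the `L^p → L^q([1,2])` operator
norm is at least `(1 − c₀)·A^{−1/p}`. -/
theorem stmt17 (f : ℝ → ℝ) (hf : ContinuousOn f (Icc (0:ℝ) 1))
    (c₀ : ℝ) (hc₀ : 0 ≤ c₀) (hc₀' : c₀ < 1)
    (K : Set (ℝ × ℝ)) (hKm : MeasurableSet K)
    (δ : ℝ) (hδ : 0 < δ) (A : ℝ) (hA : 0 < A)
    (hcurve : ∀ a ∈ Icc (1:ℝ) 2, ∃ x : ℝ × ℝ,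
      ∀ t ∈ Icc c₀ 1, (x.1 + t, x.2 + a * f t) ∈ K)
    (hvol : volume (vthick K δ) ≤ ENNReal.ofReal A) :
    (∀ a ∈ Icc (1:ℝ) 2,
      1 - c₀ ≤ Rop f δ ((vthick K δ).indicator fun _ => (1:ℝ)) a) ∧
    (∀ p q : ℝ, 1 ≤ p → 1 ≤ q →
      ENNReal.ofReal ((1 - c₀) * A ^ (-(1 / p))) ≤
        eLpNorm (Rop f δ ((vthick K δ).indicator fun _ => (1:ℝ)))
            (ENNReal.ofReal q) (volume.restrict (Icc (1:ℝ) 2)) /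
          eLpNorm ((vthick K δ).indicator fun _ => (1:ℝ))
            (ENNReal.ofReal p) volume) := by
  classical
  set V := vthick K δ with hVdef
  set g : ℝ × ℝ → ℝ := V.indicator fun _ => (1:ℝ) with hgdef
  -- a measurable core of V
  have hVfin : volume V ≠ ⊤ := ne_top_of_le_ne_top ENNReal.ofReal_ne_top hvol
  obtain ⟨E, hEm, hEV, hE0⟩ := exists_core (vthick_analytic hKm δ) hVfin
  set N' := toMeasurable volume (V \ E) with hN'def
  have hN'm : MeasurableSet N' := measurableSet_toMeasurable _ _
  have hN'0 : volume N' = 0 := by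
    rw [hN'def, measure_toMeasurable]; exact hE0
  have hVE : V ⊆ E ∪ N' := by
    intro p hp
    by_cases h : p ∈ E
    · exact Or.inl h
    · exact Or.inr (subset_toMeasurable _ _ ⟨hp, h⟩)
  -- the globally continuous replacement for f
  set f' : ℝ → ℝ := fun t => (Icc (0:ℝ) 1).restrict f (projIcc (0:ℝ) 1 zero_le_one t) with hf'def
  have hf'c : Continuous f' := hf.restrict.comp continuous_projIcc
  have hf'eq : ∀ t ∈ Icc (0:ℝ) 1, f' t = f t := by
    intro t ht
    simp only [hf'def, projIcc_of_mem zero_le_one ht, restrict_apply]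
    rfl
  have h2δ : (0:ℝ) < 2 * δ := by linarith
  -- Part 1
  have part1 : ∀ a ∈ Icc (1:ℝ) 2, 1 - c₀ ≤ Rop f δ g a := by
    intro a ha
    obtain ⟨x, hx⟩ := hcurve a ha
    set inner : (ℝ × ℝ) → ℝ → ℝ :=
      fun x' t => ∫ s in (-δ)..δ, |g (x'.1 + t, x'.2 + a * f t + s)| with hinner
    -- bounds on the inner integral
    have hinner_bd : ∀ x' t, |inner x' t| ≤ 2 * δ := by
      intro x' t
      have := intervalIntegral.norm_integral_le_of_norm_le_const
        (C := 1) (a := -δ) (b := δ)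
        (f := fun s => |g (x'.1 + t, x'.2 + a * f t + s)|) ?_
      · rw [Real.norm_eq_abs] at this
        calc |inner x' t| ≤ 1 * |δ - -δ| := this
          _ = 2 * δ := by rw [one_mul, sub_neg_eq_add, abs_of_pos (by linarith)]; ring
      · intro s _
        rw [Real.norm_eq_abs, abs_abs]
        by_cases h : (x'.1 + t, x'.2 + a * f t + s) ∈ V <;> simp [hgdef, h]
    have hinner_nonneg : ∀ x' t, 0 ≤ inner x' t := by
      intro x' t
      exact intervalIntegral.integral_nonneg (by linarith) (fun u _ => abs_nonneg _)
    -- upper bound for each x'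
    have hval_le : ∀ x' : ℝ × ℝ, (2 * δ)⁻¹ * ∫ t in (0:ℝ)..1, inner x' t ≤ 1 := by
      intro x'
      have h1 : |∫ t in (0:ℝ)..1, inner x' t| ≤ 2 * δ := by
        have := intervalIntegral.norm_integral_le_of_norm_le_const
          (C := 2 * δ) (a := (0:ℝ)) (b := 1) (f := fun t => inner x' t) ?_
        · rw [Real.norm_eq_abs] at this
          simpa using this
        · intro t _
          rw [Real.norm_eq_abs]
          exact hinner_bd x' t
      have h2 : ∫ t in (0:ℝ)..1, inner x' t ≤ 2 * δ := (le_abs_self _).trans h1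
      calc (2 * δ)⁻¹ * ∫ t in (0:ℝ)..1, inner x' t ≤ (2 * δ)⁻¹ * (2 * δ) :=
            mul_le_mul_of_nonneg_left h2 (by positivity)
        _ = 1 := inv_mul_cancel₀ h2δ.ne'
    have hbdd : BddAbove (Set.range fun x' : ℝ × ℝ =>
        (2 * δ)⁻¹ * ∫ t in (0:ℝ)..1, inner x' t) := by
      refine ⟨1, ?_⟩
      rintro y ⟨x', rfl⟩
      exact hval_le x'
    -- the inner integral equals 2δ on [c₀, 1]
    have hinner_eq : ∀ t ∈ Icc c₀ 1, inner x t = 2 * δ := by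
      intro t ht
      have hEq : EqOn (fun s => |g (x.1 + t, x.2 + a * f t + s)|) (fun _ => (1:ℝ))
          (uIcc (-δ) δ) := by
        intro s hs
        rw [uIcc_of_le (by linarith)] at hs
        have hmem : (x.1 + t, x.2 + a * f t + s) ∈ V := by
          refine ⟨(x.1 + t, x.2 + a * f t), hx t ht, rfl, ?_⟩
          simp only [add_sub_cancel_left]
          exact abs_le.2 ⟨hs.1, hs.2⟩
        simp [hgdef, hmem]
      rw [hinner]
      simp only
      rw [intervalIntegral.integral_congr hEq, intervalIntegral.integral_const]
      simp only [smul_eq_mul, mul_one, sub_neg_eq_add]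
      ring
    -- integrability of the inner integral in t
    have hint : IntervalIntegrable (inner x) volume 0 1 := by
      rw [intervalIntegrable_iff, uIoc_of_le zero_le_one]
      have h1 := inner_integrable f' hf'c a x.1 x.2 hδ hEm hN'm hN'0 hEV hVE
      refine h1.congr_fun ?_ measurableSet_Ioc
      intro t ht
      simp only [hinner, hgdef]
      rw [hf'eq t (Ioc_subset_Icc_self ht)]
    have hmem0 : (0:ℝ) ∈ uIcc (0:ℝ) 1 := by
      rw [uIcc_of_le zero_le_one]; exact ⟨le_refl 0, zero_le_one⟩
    have hmem1 : (1:ℝ) ∈ uIcc (0:ℝ) 1 := by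
      rw [uIcc_of_le zero_le_one]; exact ⟨zero_le_one, le_refl 1⟩
    have hmemc : c₀ ∈ uIcc (0:ℝ) 1 := by
      rw [uIcc_of_le zero_le_one]; exact ⟨hc₀, hc₀'.le⟩
    have hint1 : IntervalIntegrable (inner x) volume 0 c₀ :=
      hint.mono_set (uIcc_subset_uIcc hmem0 hmemc)
    have hint2 : IntervalIntegrable (inner x) volume c₀ 1 :=
      hint.mono_set (uIcc_subset_uIcc hmemc hmem1)
    have hsplit : (∫ t in (0:ℝ)..c₀, inner x t) + ∫ t in c₀..1, inner x t
        = ∫ t in (0:ℝ)..1, inner x t :=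
      intervalIntegral.integral_add_adjacent_intervals hint1 hint2
    have hpart2 : ∫ t in c₀..1, inner x t = (1 - c₀) * (2 * δ) := by
      have hEq : EqOn (inner x) (fun _ => 2 * δ) (uIcc c₀ 1) := by
        intro t ht
        rw [uIcc_of_le hc₀'.le] at ht
        exact hinner_eq t ht
      rw [intervalIntegral.integral_congr hEq, intervalIntegral.integral_const]
      simp [smul_eq_mul]
    have hpart1 : 0 ≤ ∫ t in (0:ℝ)..c₀, inner x t :=
      intervalIntegral.integral_nonneg hc₀ (fun u _ => hinner_nonneg x u)
    have hlow : (1 - c₀) * (2 * δ) ≤ ∫ t in (0:ℝ)..1, inner x t := by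
      rw [← hsplit, ← hpart2]
      exact le_add_of_nonneg_left hpart1
    have hlow' : 1 - c₀ ≤ (2 * δ)⁻¹ * ∫ t in (0:ℝ)..1, inner x t := by
      have := mul_le_mul_of_nonneg_left hlow (by positivity : (0:ℝ) ≤ (2 * δ)⁻¹)
      calc 1 - c₀ = (2 * δ)⁻¹ * ((1 - c₀) * (2 * δ)) := by
            field_simp
          _ ≤ (2 * δ)⁻¹ * ∫ t in (0:ℝ)..1, inner x t := this
    exact hlow'.trans (le_ciSup hbdd x)
  refine ⟨part1, ?_⟩
  -- Part 2
  intro p q hp hq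
  have hq0 : (ENNReal.ofReal q) ≠ 0 := by
    simp [ENNReal.ofReal_eq_zero, not_le]; linarith
  have hp0 : (ENNReal.ofReal p) ≠ 0 := by
    simp [ENNReal.ofReal_eq_zero, not_le]; linarith
  have hμIcc : volume (Icc (1:ℝ) 2) = 1 := by
    rw [Real.volume_Icc]; norm_num
  have hμ0 : (volume.restrict (Icc (1:ℝ) 2)) ≠ 0 := by
    rw [Ne, Measure.restrict_eq_zero, hμIcc]
    exact one_ne_zero
  -- lower bound on the numerator
  have hNum : ENNReal.ofReal (1 - c₀) ≤
      eLpNorm (Rop f δ g) (ENNReal.ofReal q) (volume.restrict (Icc (1:ℝ) 2)) := by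
    have hconst : eLpNorm (fun _ : ℝ => (1 - c₀)) (ENNReal.ofReal q)
        (volume.restrict (Icc (1:ℝ) 2)) = ENNReal.ofReal (1 - c₀) := by
      rw [eLpNorm_const _ hq0 hμ0, Measure.restrict_apply_univ, hμIcc,
        ENNReal.one_rpow, mul_one, Real.enorm_eq_ofReal (by linarith)]
    rw [← hconst]
    refine eLpNorm_mono_ae ?_
    filter_upwards [ae_restrict_mem measurableSet_Icc] with b hb
    rw [Real.norm_eq_abs, Real.norm_eq_abs, abs_of_nonneg (by linarith)]
    exact (part1 b hb).trans (le_abs_self _)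
  -- upper bound on the denominator
  have hDen : eLpNorm g (ENNReal.ofReal p) volume ≤ ENNReal.ofReal (A ^ (1 / p)) := by
    rw [eLpNorm_eq_lintegral_rpow_enorm_toReal hp0 ENNReal.ofReal_ne_top,
      ENNReal.toReal_ofReal (by linarith : (0:ℝ) ≤ p)]
    have hpt : ∀ z : ℝ × ℝ, ((‖g z‖₊ : ℝ≥0∞)) ^ p = V.indicator (fun _ => (1:ℝ≥0∞)) z := by
      intro z
      by_cases h : z ∈ V
      · simp [hgdef, h, ENNReal.one_rpow]
      · simp [hgdef, h, ENNReal.zero_rpow_of_pos (by linarith : (0:ℝ) < p)]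
    have h1 : (∫⁻ z, ((‖g z‖₊ : ℝ≥0∞)) ^ p ∂volume) ≤ ENNReal.ofReal A := by
      calc (∫⁻ z, ((‖g z‖₊ : ℝ≥0∞)) ^ p ∂volume)
          = ∫⁻ z, V.indicator (fun _ => (1:ℝ≥0∞)) z ∂volume := by
            exact lintegral_congr fun z => hpt z
        _ ≤ ∫⁻ _ in V, (1:ℝ≥0∞) ∂volume := lintegral_indicator_le _ _
        _ = volume V := setLIntegral_one V
        _ ≤ ENNReal.ofReal A := hvol
    calc (∫⁻ z, ((‖g z‖₊ : ℝ≥0∞)) ^ p ∂volume) ^ (1 / p)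
        ≤ (ENNReal.ofReal A) ^ (1 / p) := ENNReal.rpow_le_rpow h1 (by positivity)
      _ = ENNReal.ofReal (A ^ (1 / p)) := ENNReal.ofReal_rpow_of_pos hA
  calc ENNReal.ofReal ((1 - c₀) * A ^ (-(1 / p)))
      = ENNReal.ofReal (1 - c₀) / ENNReal.ofReal (A ^ (1 / p)) := by
        rw [Real.rpow_neg hA.le, ← div_eq_mul_inv,
          ENNReal.ofReal_div_of_pos (Real.rpow_pos_of_pos hA _)]
    _ ≤ _ := ENNReal.div_le_div hNum hDen
end
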